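/- Let X be a compact Hausdorff space, ∗ a continuous t-norm, and ψ : X → [0,1] continuous. Then the map l^ψ : MX → [0,1] defined by l^ψ(ν) = ∫^{∨∗} ψ dν = max{ν(ψ⁻¹([t,1])) ∗ t : t ∈ [0,1]} is continuous, where MX carries the topology generated by the sets {ν : ν(F) < a} for F closed and {ν : ν(U) > a} for U open. -/

import Mathlib

open Set

/-- A continuous triangular norm on `[0,1]`, modeled as a binary operation on `ℝ`
restricted to the unit interval. -/
structure Tnorm where
  op : ℝ → ℝ → ℝ
  mem' : ∀ a b : ℝ, a ∈ Set.Icc (0:ℝ) 1 → b ∈ Set.Icc (0:ℝ) 1 → op a b ∈ Set.Icc (0:ℝ) 1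
  comm' : ∀ a b : ℝ, op a b = op b a
  assoc' : ∀ a b c : ℝ, op (op a b) c = op a (op b c)
  mono' : ∀ a b c d : ℝ, a ≤ b → c ≤ d → op a c ≤ op b d
  one_id' : ∀ a ∈ Set.Icc (0:ℝ) 1, op a 1 = a
  cont' : Continuous fun p : ℝ × ℝ => op p.1 p.2

/-- An upper-semicontinuous capacity on a topological space `X`. -/
structure Capacity (X : Type*) [TopologicalSpace X] where
  toFun : Set X → ℝ
  nonneg' : ∀ A : Set X, 0 ≤ toFun A
  le_one' : ∀ A : Set X, toFun A ≤ 1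
  empty' : toFun (∅ : Set X) = 0
  univ' : toFun (Set.univ : Set X) = 1
  mono' : ∀ A B : Set X, A ⊆ B → toFun A ≤ toFun B
  usc' : ∀ F : Set X, IsClosed F → ∀ a : ℝ, toFun F < a →
    ∃ O : Set X, IsOpen O ∧ F ⊆ O ∧ ∀ B : Set X, B ⊆ O → IsCompact B → toFun B < a

/-- Two functions are comonotone (equiordered). -/
def Comonotone {X : Type*} (φ ψ : X → ℝ) : Prop :=
  ∀ x₁ x₂ : X, 0 ≤ (φ x₁ - φ x₂) * (ψ x₁ - ψ x₂)

/-- The t-normed integral `∫^{∨∗} f dν = sup { ν(f⁻¹[t,1]) ∗ t : t ∈ [0,1] }`. -/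
noncomputable def tInt {X : Type*} [TopologicalSpace X] (T : Tnorm) (ν : Capacity X)
    (f : X → ℝ) : ℝ :=
  sSup ((fun t : ℝ => T.op (ν.toFun (f ⁻¹' Set.Icc t 1)) t) '' Set.Icc (0:ℝ) 1)

/-- Extension of a capacity to (open) sets: `ν(U) = sup{ν(K) : K closed, K ⊆ U}`. -/
noncomputable def capOpen {X : Type*} [TopologicalSpace X] (ν : Capacity X) (U : Set X) : ℝ :=
  sSup (ν.toFun '' {K : Set X | IsClosed K ∧ K ⊆ U})

/-- The topology on the space of capacities, generated by the subbasis
`O₋(F,a) = {ν : ν(F) < a}` (`F` closed) and `O₊(U,a) = {ν : ν(U) > a}` (`U` open). -/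
instance capacityTop (X : Type*) [TopologicalSpace X] : TopologicalSpace (Capacity X) :=
  TopologicalSpace.generateFrom
    {S : Set (Capacity X) |
      (∃ F : Set X, ∃ a : ℝ, IsClosed F ∧ S = {ν : Capacity X | ν.toFun F < a}) ∨
      (∃ U : Set X, ∃ a : ℝ, IsOpen U ∧ S = {ν : Capacity X | a < capOpen ν U})}

section Aux

variable {X : Type*} [TopologicalSpace X]

lemma tInt_set_nonempty (T : Tnorm) (ν : Capacity X) (ψ : X → ℝ) :
    ((fun t : ℝ => T.op (ν.toFun (ψ ⁻¹' Set.Icc t 1)) t) '' Set.Icc (0:ℝ) 1).Nonempty :=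
  ⟨_, ⟨0, ⟨le_rfl, zero_le_one⟩, rfl⟩⟩

lemma tInt_set_bddAbove (T : Tnorm) (ν : Capacity X) (ψ : X → ℝ) :
    BddAbove ((fun t : ℝ => T.op (ν.toFun (ψ ⁻¹' Set.Icc t 1)) t) '' Set.Icc (0:ℝ) 1) := by
  refine ⟨1, ?_⟩
  rintro y ⟨t, ht, rfl⟩
  exact (T.mem' _ _ ⟨ν.nonneg' _, ν.le_one' _⟩ ht).2

lemma le_tInt (T : Tnorm) (ν : Capacity X) (ψ : X → ℝ) {t : ℝ} (ht : t ∈ Set.Icc (0:ℝ) 1) :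
    T.op (ν.toFun (ψ ⁻¹' Set.Icc t 1)) t ≤ tInt T ν ψ :=
  le_csSup (tInt_set_bddAbove T ν ψ) ⟨t, ht, rfl⟩

lemma tInt_nonneg (T : Tnorm) (ν : Capacity X) (ψ : X → ℝ) : 0 ≤ tInt T ν ψ :=
  le_trans (T.mem' _ _ ⟨ν.nonneg' _, ν.le_one' _⟩ ⟨le_rfl, zero_le_one⟩).1
    (le_tInt T ν ψ ⟨le_rfl, zero_le_one⟩)

lemma tInt_le (T : Tnorm) (ν : Capacity X) (ψ : X → ℝ) {b : ℝ}
    (h : ∀ t ∈ Set.Icc (0:ℝ) 1, T.op (ν.toFun (ψ ⁻¹' Set.Icc t 1)) t ≤ b) :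
    tInt T ν ψ ≤ b := by
  refine csSup_le (tInt_set_nonempty T ν ψ) ?_
  rintro y ⟨t, ht, rfl⟩
  exact h t ht

lemma le_capOpen (ν : Capacity X) {K U : Set X} (hK : IsClosed K) (hKU : K ⊆ U) :
    ν.toFun K ≤ capOpen ν U := by
  refine le_csSup ⟨1, ?_⟩ ⟨K, ⟨hK, hKU⟩, rfl⟩
  rintro y ⟨L, _, rfl⟩
  exact ν.le_one' L

lemma Tnorm.op_one_zero (T : Tnorm) : T.op 1 0 = 0 := by
  rw [T.comm']
  exact T.one_id' 0 ⟨le_rfl, zero_le_one⟩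

lemma exists_pos_lt_of_nhds {P : ℝ → Prop} (h : {δ : ℝ | P δ} ∈ nhds (0:ℝ)) {η : ℝ}
    (hη : 0 < η) : ∃ δ : ℝ, 0 < δ ∧ δ < η ∧ P δ := by
  obtain ⟨ε, hε, hball⟩ := Metric.mem_nhds_iff.1 h
  refine ⟨min (ε/2) (η/2), by positivity,
    lt_of_le_of_lt (min_le_right _ _) (by linarith), hball ?_⟩
  rw [Metric.mem_ball, Real.dist_eq, sub_zero, abs_of_pos (by positivity)]
  exact lt_of_le_of_lt (min_le_left _ _) (by linarith)

/-- The subbasic open sets `O₋(F,a)` are open. -/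
lemma isOpen_Ominus {F : Set X} (hF : IsClosed F) (a : ℝ) :
    IsOpen {ν : Capacity X | ν.toFun F < a} :=
  TopologicalSpace.isOpen_generateFrom_of_mem (Or.inl ⟨F, a, hF, rfl⟩)

/-- The subbasic open sets `O₊(U,a)` are open. -/
lemma isOpen_Oplus {U : Set X} (hU : IsOpen U) (a : ℝ) :
    IsOpen {ν : Capacity X | a < capOpen ν U} :=
  TopologicalSpace.isOpen_generateFrom_of_mem (Or.inr ⟨U, a, hU, rfl⟩)

/-- Lower semicontinuity part. -/
lemma isOpen_lt_tInt (T : Tnorm) (ψ : X → ℝ) (hψc : Continuous ψ)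
    (hψr : ∀ x, ψ x ∈ Set.Icc (0:ℝ) 1) (c : ℝ) :
    IsOpen {ν : Capacity X | c < tInt T ν ψ} := by
  rcases lt_or_ge c 0 with hc | hc
  · have : {ν : Capacity X | c < tInt T ν ψ} = univ := by
      ext ν
      simp only [mem_setOf_eq, mem_univ, iff_true]
      exact lt_of_lt_of_le hc (tInt_nonneg T ν ψ)
    rw [this]; exact isOpen_univ
  · rw [isOpen_iff_forall_mem_open]
    intro ν₀ hν₀
    obtain ⟨y, ⟨t, ht, rfl⟩, hy⟩ :=
      exists_lt_of_lt_csSup (tInt_set_nonempty T ν₀ ψ) hν₀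
    set r := ν₀.toFun (ψ ⁻¹' Set.Icc t 1) with hr
    have hrle : r ≤ 1 := ν₀.le_one' _
    have hrpos : 0 < r := by
      by_contra hcon
      push_neg at hcon
      have : T.op r t ≤ 0 := by
        calc T.op r t ≤ T.op 0 1 := T.mono' _ _ _ _ hcon ht.2
        _ = 0 := T.one_id' 0 ⟨le_rfl, zero_le_one⟩
      exact absurd hy (not_lt.2 (this.trans hc))
    have htpos : 0 < t := by
      by_contra hcon
      push_neg at hcon
      have : T.op r t ≤ 0 := by
        calc T.op r t ≤ T.op 1 0 := T.mono' _ _ _ _ hrle hcon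
        _ = 0 := T.op_one_zero
      exact absurd hy (not_lt.2 (this.trans hc))
    -- pick δ
    have hcontδ : Continuous fun δ : ℝ => T.op (r - δ) (t - δ) :=
      T.cont'.comp ((continuous_const.sub continuous_id).prodMk
        (continuous_const.sub continuous_id))
    have hmem : {δ : ℝ | c < T.op (r - δ) (t - δ)} ∈ nhds (0:ℝ) := by
      have h0 : c < T.op (r - 0) (t - 0) := by simpa using hy
      exact hcontδ.continuousAt.preimage_mem_nhds (Ioi_mem_nhds h0)
    obtain ⟨δ, hδpos, hδlt, hδ⟩ := exists_pos_lt_of_nhds hmem (lt_min hrpos htpos)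
    have hδr : δ < r := lt_of_lt_of_le hδlt (min_le_left _ _)
    have hδt : δ < t := lt_of_lt_of_le hδlt (min_le_right _ _)
    set s := t - δ with hs
    set a := r - δ with ha
    set U := ψ ⁻¹' Set.Ioi s with hU
    have hUopen : IsOpen U := isOpen_Ioi.preimage hψc
    refine ⟨{ν : Capacity X | a < capOpen ν U}, ?_, isOpen_Oplus hUopen a, ?_⟩
    · intro ν hν
      have hne : (ν.toFun '' {K : Set X | IsClosed K ∧ K ⊆ U}).Nonempty :=
        ⟨ν.toFun ∅, ⟨∅, ⟨isClosed_empty, empty_subset _⟩, rfl⟩⟩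
      obtain ⟨y, ⟨K, ⟨hKcl, hKU⟩, rfl⟩, hKa⟩ := exists_lt_of_lt_csSup hne hν
      have hKs : K ⊆ ψ ⁻¹' Set.Icc s 1 := fun x hx => ⟨le_of_lt (hKU hx), (hψr x).2⟩
      have h1 : a ≤ ν.toFun (ψ ⁻¹' Set.Icc s 1) :=
        le_of_lt (lt_of_lt_of_le hKa (ν.mono' _ _ hKs))
      have h2 : c < T.op (ν.toFun (ψ ⁻¹' Set.Icc s 1)) s :=
        lt_of_lt_of_le hδ (T.mono' _ _ _ _ h1 le_rfl)
      exact lt_of_lt_of_le h2 (le_tInt T ν ψ ⟨by linarith, by linarith [ht.2]⟩)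
    · show a < capOpen ν₀ U
      have hFU : ψ ⁻¹' Set.Icc t 1 ⊆ U := fun x hx => lt_of_lt_of_le (by linarith) hx.1
      have := le_capOpen ν₀ (isClosed_Icc.preimage hψc) hFU
      linarith

/-- Upper semicontinuity part. -/
lemma isOpen_tInt_lt {X : Type*} [TopologicalSpace X] [CompactSpace X] (T : Tnorm)
    (ψ : X → ℝ) (hψc : Continuous ψ) (hψr : ∀ x, ψ x ∈ Set.Icc (0:ℝ) 1) (c : ℝ) :
    IsOpen {ν : Capacity X | tInt T ν ψ < c} := by
  rw [isOpen_iff_forall_mem_open]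
  intro ν₀ hν₀
  have hc : 0 < c := lt_of_le_of_lt (tInt_nonneg T ν₀ ψ) hν₀
  have key : ∀ t : ℝ, t ∈ Set.Icc (0:ℝ) 1 → ∃ (G : Set X) (a b : ℝ) (V : Set ℝ),
      IsClosed G ∧ IsOpen V ∧ t ∈ V ∧ ν₀.toFun G < a ∧ b < c ∧
      ∀ ν : Capacity X, ν.toFun G < a → ∀ s ∈ V ∩ Set.Icc (0:ℝ) 1,
        T.op (ν.toFun (ψ ⁻¹' Set.Icc s 1)) s ≤ b := by
    intro t ht
    rcases ht.1.eq_or_lt with h0 | htpos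
    · -- t = 0
      have hcontδ : Continuous fun δ : ℝ => T.op 1 δ :=
        T.cont'.comp (continuous_const.prodMk continuous_id)
      have hmem : {δ : ℝ | T.op 1 δ < c} ∈ nhds (0:ℝ) := by
        have h0' : T.op 1 (0:ℝ) < c := by rw [T.op_one_zero]; exact hc
        exact hcontδ.continuousAt.preimage_mem_nhds (Iio_mem_nhds h0')
      obtain ⟨δ₀, hδ₀pos, _, hδ₀⟩ := exists_pos_lt_of_nhds hmem one_pos
      refine ⟨∅, 1, T.op 1 δ₀, Set.Iio δ₀, isClosed_empty, isOpen_Iio, ?_, ?_, hδ₀, ?_⟩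
      · rw [← h0]; exact hδ₀pos
      · rw [ν₀.empty']; norm_num
      · rintro ν _ s ⟨hsV, _⟩
        exact T.mono' _ _ _ _ (ν.le_one' _) (le_of_lt hsV)
    · -- t > 0
      have hgt : T.op (ν₀.toFun (ψ ⁻¹' Set.Icc t 1)) t < c :=
        lt_of_le_of_lt (le_tInt T ν₀ ψ ht) hν₀
      set r := ν₀.toFun (ψ ⁻¹' Set.Icc t 1) with hrdef
      have hcontδ : Continuous fun δ : ℝ => T.op (r + δ) (t + δ) :=
        T.cont'.comp ((continuous_const.add continuous_id).prodMk
          (continuous_const.add continuous_id))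
      have hmem : {δ : ℝ | T.op (r + δ) (t + δ) < c} ∈ nhds (0:ℝ) := by
        have h0' : T.op (r + 0) (t + 0) < c := by simpa using hgt
        exact hcontδ.continuousAt.preimage_mem_nhds (Iio_mem_nhds h0')
      obtain ⟨δ, hδpos, _, hδ⟩ := exists_pos_lt_of_nhds hmem one_pos
      obtain ⟨O, hOopen, hFO, hOprop⟩ :=
        ν₀.usc' _ (isClosed_Icc.preimage hψc) (r + δ) (by linarith)
      -- find n with ψ ⁻¹' Icc (t - 1/(n+1)) 1 ⊆ O
      have hseq : ∃ n : ℕ, ψ ⁻¹' Set.Icc (t - 1/((n:ℝ)+1)) 1 ⊆ O := by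
        by_contra hcon
        push_neg at hcon
        set K : ℕ → Set X := fun n => ψ ⁻¹' Set.Icc (t - 1/((n:ℝ)+1)) 1 ∩ Oᶜ with hK
        have hKne : ∀ n, (K n).Nonempty := by
          intro n
          rcases not_subset.1 (hcon n) with ⟨x, hx1, hx2⟩
          exact ⟨x, hx1, hx2⟩
        have hKdec : ∀ n, K (n+1) ⊆ K n := by
          intro n
          apply inter_subset_inter_left
          apply preimage_mono
          apply Icc_subset_Icc _ le_rfl
          have h1 : (1:ℝ)/((n:ℝ)+1+1) ≤ 1/((n:ℝ)+1) := by
            apply one_div_le_one_div_of_le <;> [positivity; linarith]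
          push_cast
          linarith
        have hKcl : ∀ n, IsClosed (K n) := fun n =>
          (isClosed_Icc.preimage hψc).inter hOopen.isClosed_compl
        obtain ⟨x, hx⟩ := IsCompact.nonempty_iInter_of_sequence_nonempty_isCompact_isClosed
          K hKdec hKne ((hKcl 0).isCompact) hKcl
        have hxO : x ∉ O := (mem_iInter.1 hx 0).2
        have hxt : ψ x ∈ Set.Icc t 1 := by
          refine ⟨?_, (hψr x).2⟩
          by_contra hlt
          push_neg at hlt
          obtain ⟨n, hn⟩ := exists_nat_one_div_lt (show (0:ℝ) < t - ψ x by linarith)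
          have h2 := (mem_iInter.1 hx n).1.1
          change t - 1/((n:ℝ)+1) ≤ ψ x at h2
          linarith
        exact hxO (hFO hxt)
      obtain ⟨n, hn⟩ := hseq
      set ε := 1/((n:ℝ)+1) with hε
      have hεpos : 0 < ε := by positivity
      set G := ψ ⁻¹' Set.Icc (t - ε) 1 with hG
      have hGcl : IsClosed G := isClosed_Icc.preimage hψc
      refine ⟨G, r + δ, T.op (r + δ) (t + δ), Set.Ioo (t - ε) (t + δ), hGcl, isOpen_Ioo,
        ⟨by linarith, by linarith⟩, ?_, hδ, ?_⟩
      · exact hOprop G hn hGcl.isCompact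
      · rintro ν hνG s ⟨hsV, hs⟩
        have hsub : ψ ⁻¹' Set.Icc s 1 ⊆ G :=
          preimage_mono (Icc_subset_Icc (le_of_lt hsV.1) le_rfl)
        have h1 : ν.toFun (ψ ⁻¹' Set.Icc s 1) ≤ r + δ :=
          le_of_lt (lt_of_le_of_lt (ν.mono' _ _ hsub) hνG)
        exact T.mono' _ _ _ _ h1 (le_of_lt hsV.2)
  choose G a b V hGc hVo htV hν₀G hbc hkey using fun i : ↥(Set.Icc (0:ℝ) 1) => key i i.2
  obtain ⟨I, hI⟩ := isCompact_Icc.elim_finite_subcover V hVo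
    (fun x hx => mem_iUnion.2 ⟨⟨x, hx⟩, htV _⟩)
  have hIne : I.Nonempty := by
    obtain ⟨i, hiI, -⟩ := mem_iUnion₂.1 (hI (⟨le_rfl, zero_le_one⟩ : (0:ℝ) ∈ Set.Icc (0:ℝ) 1))
    exact ⟨i, hiI⟩
  refine ⟨⋂ i ∈ I, {ν : Capacity X | ν.toFun (G i) < a i}, ?_, ?_, ?_⟩
  · intro ν hν
    have hbound : tInt T ν ψ ≤ I.sup' hIne b := by
      refine tInt_le T ν ψ ?_
      intro s hs
      obtain ⟨i, hiI, hsV⟩ := mem_iUnion₂.1 (hI hs)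
      have h1 := hkey i ν (mem_iInter₂.1 hν i hiI) s ⟨hsV, hs⟩
      exact h1.trans (Finset.le_sup' b hiI)
    exact lt_of_le_of_lt hbound (Finset.sup'_lt_iff hIne |>.2 fun i _ => hbc i)
  · exact isOpen_biInter_finset fun i _ => isOpen_Ominus (hGc i) (a i)
  · exact mem_iInter₂.2 fun i _ => hν₀G i

end Aux

/-- The map `ν ↦ ∫^{∨∗} ψ dν` is continuous on the space of capacities. -/
theorem tInt_continuous_in_capacity {X : Type*} [TopologicalSpace X] [CompactSpace X]
    [T2Space X] (T : Tnorm) (ψ : X → ℝ) (hψc : Continuous ψ)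
    (hψr : ∀ x, ψ x ∈ Set.Icc (0:ℝ) 1) :
    Continuous fun ν : Capacity X => tInt T ν ψ := by
  rw [continuous_iff_continuousAt]
  intro ν₀
  rw [ContinuousAt, tendsto_order]
  constructor
  · intro b hb
    exact (isOpen_lt_tInt T ψ hψc hψr b).mem_nhds hb
  · intro b hb
    exact (isOpen_tInt_lt T ψ hψc hψr b).mem_nhds hb
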